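/- Over {a<b<c}, for any word w whose projection π_{a,c}(w) has print of length at least 7 (i.e., the b-erased word alternates/changes letter at least 6 times), w is M-equivalent to a word containing ac or ca as a factor. -/
import Mathlib

open List

/-- Number of occurrences of `v` as a scattered subsequence of `w`. -/
def scount {α : Type*} [DecidableEq α] (w v : List α) : ℕ := w.sublists.count v

/-- The ternary ordered alphabet {a < b < c}. -/
inductive ABC | a | b | c
deriving DecidableEq

open ABC

/-- M-equivalence over the ordered alphabet {a < b < c}. -/
def MEq3 (w w' : List ABC) : Prop :=
  scount w [a] = scount w' [a] ∧ scount w [b] = scount w' [b] ∧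
  scount w [c] = scount w' [c] ∧ scount w [a, b] = scount w' [a, b] ∧
  scount w [b, c] = scount w' [b, c] ∧ scount w [a, b, c] = scount w' [a, b, c]

/-- Projection onto {a, c}: erase all b's. -/
def projAC (w : List ABC) : List ABC := w.filter (· ≠ b)

abbrev A (k : ℕ) : List ABC := List.replicate k a
abbrev B (k : ℕ) : List ABC := List.replicate k b
abbrev C (k : ℕ) : List ABC := List.replicate k c

section Core
variable {α : Type*} [DecidableEq α]

lemma scount_eq_countP (w v : List α) : scount w v = w.sublists.countP (fun s => decide (s = v)) := by
  unfold scount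
  rw [count_eq_countP]
  exact countP_congr (fun s _ => by simp)

@[simp] lemma scount_nil_nil : scount ([] : List α) [] = 1 := by
  simp [scount_eq_countP, sublists_nil]

@[simp] lemma scount_nil_cons (y : α) (v : List α) : scount ([] : List α) (y :: v) = 0 := by
  simp [scount_eq_countP, sublists_nil]

lemma scount_cons (x : α) (w : List α) (y : α) (v : List α) :
    scount (x :: w) (y :: v) = scount w (y :: v) + if y = x then scount w v else 0 := by
  simp only [scount_eq_countP]
  rw [(sublists_cons_perm_append x w).countP_eq, countP_append, countP_map]
  congr 1
  by_cases h : y = x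
  · subst h
    rw [if_pos rfl]
    refine countP_congr (fun s _ => ?_)
    simp
  · rw [if_neg h]
    refine countP_eq_zero.mpr (fun s _ => ?_)
    simp only [Function.comp_apply, decide_eq_true_eq]
    intro hs
    exact h (by injection hs.symm)

lemma scount_cons_nil (x : α) (w : List α) : scount (x :: w) [] = scount w [] := by
  simp only [scount_eq_countP]
  rw [(sublists_cons_perm_append x w).countP_eq, countP_append, countP_map]
  have : countP ((fun s => decide (s = ([] : List α))) ∘ cons x) w.sublists = 0 := by
    refine countP_eq_zero.mpr (fun s _ => ?_)
    simp
  omega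

@[simp] lemma scount_empty_pat (w : List α) : scount w [] = 1 := by
  induction w with
  | nil => exact scount_nil_nil
  | cons x w ih => rw [scount_cons_nil]; exact ih

lemma scount_append_single (x : α) (u v : List α) :
    scount (u ++ v) [x] = scount u [x] + scount v [x] := by
  induction u with
  | nil => simp
  | cons t u ih =>
    simp only [cons_append, scount_cons, ih, scount_empty_pat]
    split_ifs <;> omega

lemma scount_append_pair (x y : α) (u v : List α) :
    scount (u ++ v) [x, y] =
      scount u [x, y] + scount u [x] * scount v [y] + scount v [x, y] := by
  induction u with
  | nil => simp
  | cons t u ih =>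
    simp only [cons_append, scount_cons, ih, scount_append_single, scount_empty_pat]
    split_ifs <;> ring

lemma scount_append_triple (x y z : α) (u v : List α) :
    scount (u ++ v) [x, y, z] =
      scount u [x, y, z] + scount u [x, y] * scount v [z] +
        scount u [x] * scount v [y, z] + scount v [x, y, z] := by
  induction u with
  | nil => simp
  | cons t u ih =>
    simp only [cons_append, scount_cons, ih, scount_append_single, scount_append_pair, scount_empty_pat]
    split_ifs <;> ring

lemma scount_rep_single (x y : α) (k : ℕ) :
    scount (replicate k x) [y] = if y = x then k else 0 := by
  induction k with
  | zero => simp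
  | succ k ih =>
    rw [replicate_succ, scount_cons, ih]
    split_ifs <;> simp

lemma scount_rep_ne_head (x y : α) (v : List α) (h : y ≠ x) (k : ℕ) :
    scount (replicate k x) (y :: v) = 0 := by
  induction k with
  | zero => simp
  | succ k ih => rw [replicate_succ, scount_cons, ih, if_neg h]

lemma scount_rep_pair_last (x y z : α) (h : z ≠ x) (k : ℕ) :
    scount (replicate k x) [y, z] = 0 := by
  induction k with
  | zero => simp
  | succ k ih =>
    rw [replicate_succ, scount_cons, ih, scount_rep_ne_head _ _ _ h]
    simp

lemma scount_rep_triple_last (x x1 y1 z1 : α) (h : z1 ≠ x) (k : ℕ) :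
    scount (replicate k x) [x1, y1, z1] = 0 := by
  induction k with
  | zero => simp
  | succ k ih =>
    rw [replicate_succ, scount_cons, ih, scount_rep_pair_last _ _ _ h]
    simp

end Core

section ABCStats
open ABC

-- value lemmas for replicate blocks
@[simp] lemma sB_a (k : ℕ) : scount (B k) [a] = 0 := by
  rw [scount_rep_single]; simp
@[simp] lemma sB_b (k : ℕ) : scount (B k) [b] = k := by
  rw [scount_rep_single]; simp
@[simp] lemma sB_c (k : ℕ) : scount (B k) [c] = 0 := by
  rw [scount_rep_single]; simp
@[simp] lemma sB_ab (k : ℕ) : scount (B k) [a, b] = 0 :=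
  scount_rep_ne_head b a [b] (by simp) k
@[simp] lemma sB_bc (k : ℕ) : scount (B k) [b, c] = 0 :=
  scount_rep_pair_last b b c (by simp) k
@[simp] lemma sB_abc (k : ℕ) : scount (B k) [a, b, c] = 0 :=
  scount_rep_triple_last b a b c (by simp) k

@[simp] lemma sA_a (k : ℕ) : scount (A k) [a] = k := by
  rw [scount_rep_single]; simp
@[simp] lemma sA_b (k : ℕ) : scount (A k) [b] = 0 := by
  rw [scount_rep_single]; simp
@[simp] lemma sA_c (k : ℕ) : scount (A k) [c] = 0 := by
  rw [scount_rep_single]; simp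
@[simp] lemma sA_ab (k : ℕ) : scount (A k) [a, b] = 0 :=
  scount_rep_pair_last a a b (by simp) k
@[simp] lemma sA_bc (k : ℕ) : scount (A k) [b, c] = 0 :=
  scount_rep_ne_head a b [c] (by simp) k
@[simp] lemma sA_abc (k : ℕ) : scount (A k) [a, b, c] = 0 :=
  scount_rep_triple_last a a b c (by simp) k

@[simp] lemma sC_a (k : ℕ) : scount (C k) [a] = 0 := by
  rw [scount_rep_single]; simp
@[simp] lemma sC_b (k : ℕ) : scount (C k) [b] = 0 := by
  rw [scount_rep_single]; simp
@[simp] lemma sC_c (k : ℕ) : scount (C k) [c] = k := by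
  rw [scount_rep_single]; simp
@[simp] lemma sC_ab (k : ℕ) : scount (C k) [a, b] = 0 :=
  scount_rep_ne_head c a [b] (by simp) k
@[simp] lemma sC_bc (k : ℕ) : scount (C k) [b, c] = 0 :=
  scount_rep_ne_head c b [c] (by simp) k
@[simp] lemma sC_abc (k : ℕ) : scount (C k) [a, b, c] = 0 :=
  scount_rep_ne_head c a [b, c] (by simp) k

attribute [simp] scount_append_single scount_append_pair scount_append_triple scount_cons

end ABCStats

section MEq3Basic
open ABC

lemma MEq3_refl (w : List ABC) : MEq3 w w := ⟨rfl, rfl, rfl, rfl, rfl, rfl⟩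

lemma MEq3_congr {f f' : List ABC} (h : MEq3 f f') (u v : List ABC) :
    MEq3 (u ++ f ++ v) (u ++ f' ++ v) := by
  obtain ⟨h1, h2, h3, h4, h5, h6⟩ := h
  refine ⟨?_, ?_, ?_, ?_, ?_, ?_⟩ <;>
    simp only [append_assoc, scount_append_single, scount_append_pair,
      scount_append_triple, h1, h2, h3, h4, h5, h6]

/-- The target property. -/
def GoodF (w : List ABC) : Prop :=
  ∃ w' : List ABC, MEq3 w w' ∧ ([a, c] <:+: w' ∨ [c, a] <:+: w')

lemma GoodF_mono {f : List ABC} (h : GoodF f) (u v : List ABC) : GoodF (u ++ f ++ v) := by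
  obtain ⟨f', hM, hadj⟩ := h
  refine ⟨u ++ f' ++ v, MEq3_congr hM u v, ?_⟩
  rcases hadj with h' | h'
  · exact Or.inl (h'.trans ⟨u, v, rfl⟩)
  · exact Or.inr (h'.trans ⟨u, v, rfl⟩)

end MEq3Basic

section Identities
variable {α : Type*} [DecidableEq α]

lemma scount_pair_add_pair (x y : α) (hxy : x ≠ y) (w : List α) :
    scount w [x, y] + scount w [y, x] = scount w [x] * scount w [y] := by
  induction w with
  | nil => simp
  | cons t w ih =>
    simp only [scount_cons, scount_empty_pat]
    split_ifs with h1 h2 h2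
    · exact absurd (h1.trans h2.symm) hxy
    all_goals (zify at ih ⊢; linear_combination ih)

lemma scount_cba_identity (w : List ABC) :
    scount w [ABC.c, ABC.b, ABC.a] + scount w [ABC.c] * scount w [ABC.a, ABC.b]
      + scount w [ABC.a] * scount w [ABC.b, ABC.c]
    = scount w [ABC.a] * scount w [ABC.b] * scount w [ABC.c]
      + scount w [ABC.a, ABC.b, ABC.c] := by
  induction w with
  | nil => simp
  | cons t w ih =>
    have pab := scount_pair_add_pair ABC.a ABC.b (by simp) w
    have pba := scount_pair_add_pair ABC.b ABC.a (by simp) w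
    cases t <;>
      · simp only [scount_cons, scount_empty_pat]
        simp only [reduceCtorEq, if_false, if_true, reduceIte]
        zify at ih pab ⊢
        first
        | linear_combination ih
        | linear_combination ih + pab

lemma scount_reverse_single (x : α) (w : List α) :
    scount w.reverse [x] = scount w [x] := by
  induction w with
  | nil => rfl
  | cons t w ih =>
    simp only [reverse_cons, scount_append_single, ih, scount_cons, scount_nil_cons,
      scount_empty_pat, scount_nil_nil]
    split_ifs <;> omega

lemma scount_reverse_pair (x y : α) (w : List α) :
    scount w.reverse [x, y] = scount w [y, x] := by
  induction w with
  | nil => rfl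
  | cons t w ih =>
    simp only [reverse_cons, scount_append_pair, ih, scount_reverse_single, scount_cons,
      scount_nil_cons, scount_empty_pat, scount_nil_nil]
    split_ifs <;> ring

lemma scount_reverse_triple (x y z : α) (w : List α) :
    scount w.reverse [x, y, z] = scount w [z, y, x] := by
  induction w with
  | nil => rfl
  | cons t w ih =>
    simp only [reverse_cons, scount_append_triple, ih, scount_reverse_single,
      scount_reverse_pair, scount_cons, scount_nil_cons, scount_empty_pat, scount_nil_nil]
    split_ifs <;> ring

lemma scount_map_inj {β : Type*} [DecidableEq β] {f : α → β} (hf : Function.Injective f)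
    (w v : List α) : scount (w.map f) (v.map f) = scount w v := by
  simp only [scount_eq_countP, sublists_map, countP_map]
  refine countP_congr (fun s _ => ?_)
  simp [Function.comp_apply, (map_injective_iff.mpr hf).eq_iff]

end Identities

section Transfers
open ABC

/-- swap a and c -/
def sw : ABC → ABC
  | a => c
  | b => b
  | c => a

lemma sw_inj : Function.Injective sw := by
  intro x y h
  cases x <;> cases y <;> simp_all [sw]

lemma sw_sw (w : List ABC) : (w.map sw).map sw = w := by
  rw [map_map]
  have : sw ∘ sw = id := funext (fun z => by cases z <;> rfl)
  rw [this, map_id]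

lemma MEq3_rev {u v : List ABC} (h : MEq3 u v) : MEq3 u.reverse v.reverse := by
  obtain ⟨h1, h2, h3, h4, h5, h6⟩ := h
  have pu := scount_pair_add_pair b a (by simp) u
  have pv := scount_pair_add_pair b a (by simp) v
  have qu := scount_pair_add_pair c b (by simp) u
  have qv := scount_pair_add_pair c b (by simp) v
  have cu := scount_cba_identity u
  have cv := scount_cba_identity v
  rw [← h1, ← h2, ← h4] at pv
  rw [← h2, ← h3, ← h5] at qv
  rw [← h1, ← h2, ← h3, ← h4, ← h5, ← h6] at cv
  refine ⟨?_, ?_, ?_, ?_, ?_, ?_⟩ <;>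
    simp only [scount_reverse_single, scount_reverse_pair, scount_reverse_triple]
  · exact h1
  · exact h2
  · exact h3
  · linarith [pu, pv]
  · linarith [qu, qv]
  · linarith [cu, cv]

lemma MEq3_swap {u v : List ABC} (h : MEq3 u v) : MEq3 (u.map sw) (v.map sw) := by
  obtain ⟨h1, h2, h3, h4, h5, h6⟩ := h
  have pu := scount_pair_add_pair c b (by simp) u
  have pv := scount_pair_add_pair c b (by simp) v
  have qu := scount_pair_add_pair b a (by simp) u
  have qv := scount_pair_add_pair b a (by simp) v
  have cu := scount_cba_identity u
  have cv := scount_cba_identity v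
  rw [← h2, ← h3, ← h5] at pv
  rw [← h1, ← h2, ← h4] at qv
  rw [← h1, ← h2, ← h3, ← h4, ← h5, ← h6] at cv
  have e1 : scount (u.map sw) [a] = scount u [c] := scount_map_inj sw_inj u [c]
  have f1 : scount (v.map sw) [a] = scount v [c] := scount_map_inj sw_inj v [c]
  have e2 : scount (u.map sw) [b] = scount u [b] := scount_map_inj sw_inj u [b]
  have f2 : scount (v.map sw) [b] = scount v [b] := scount_map_inj sw_inj v [b]
  have e3 : scount (u.map sw) [c] = scount u [a] := scount_map_inj sw_inj u [a]
  have f3 : scount (v.map sw) [c] = scount v [a] := scount_map_inj sw_inj v [a]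
  have e4 : scount (u.map sw) [a, b] = scount u [c, b] := scount_map_inj sw_inj u [c, b]
  have f4 : scount (v.map sw) [a, b] = scount v [c, b] := scount_map_inj sw_inj v [c, b]
  have e5 : scount (u.map sw) [b, c] = scount u [b, a] := scount_map_inj sw_inj u [b, a]
  have f5 : scount (v.map sw) [b, c] = scount v [b, a] := scount_map_inj sw_inj v [b, a]
  have e6 : scount (u.map sw) [a, b, c] = scount u [c, b, a] := scount_map_inj sw_inj u [c, b, a]
  have f6 : scount (v.map sw) [a, b, c] = scount v [c, b, a] := scount_map_inj sw_inj v [c, b, a]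
  refine ⟨?_, ?_, ?_, ?_, ?_, ?_⟩
  · rw [e1, f1]; exact h3
  · rw [e2, f2]; exact h2
  · rw [e3, f3]; exact h1
  · rw [e4, f4]; linarith [pu, pv]
  · rw [e5, f5]; linarith [qu, qv]
  · rw [e6, f6]; linarith [cu, cv]

lemma GoodF_rev {w : List ABC} (h : GoodF w) : GoodF w.reverse := by
  obtain ⟨w', hM, hadj⟩ := h
  refine ⟨w'.reverse, MEq3_rev hM, ?_⟩
  rcases hadj with h' | h'
  · exact Or.inr (by simpa using reverse_infix.mpr h')
  · exact Or.inl (by simpa using reverse_infix.mpr h')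

lemma GoodF_swap {w : List ABC} (h : GoodF w) : GoodF (w.map sw) := by
  obtain ⟨w', hM, hadj⟩ := h
  refine ⟨w'.map sw, MEq3_swap hM, ?_⟩
  rcases hadj with h' | h'
  · exact Or.inr (by simpa [sw] using h'.map sw)
  · exact Or.inl (by simpa [sw] using h'.map sw)

end Transfers

section Region
open ABC

lemma noC_bc {M : List ABC} (hc : scount M [c] = 0) : scount M [b, c] = 0 := by
  have h := scount_pair_add_pair b c (by simp) M
  rw [hc, mul_zero] at h
  omega

lemma noC_abc : ∀ M : List ABC, scount M [c] = 0 → scount M [a, b, c] = 0 := by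
  intro M
  induction M with
  | nil => simp
  | cons t M ih =>
    intro hc
    cases t <;> simp only [scount_cons, scount_empty_pat] at hc ⊢ <;>
      simp_all [noC_bc, reduceCtorEq]

lemma sAB_le (w : List ABC) : scount w [a, b] ≤ scount w [a] * scount w [b] :=
  Nat.le.intro (scount_pair_add_pair a b (by simp) w)

lemma realizeAB : ∀ p m s : ℕ, s ≤ p * m →
    ∃ M : List ABC, scount M [a] = p ∧ scount M [b] = m ∧ scount M [c] = 0 ∧
      scount M [a, b] = s := by
  intro p
  induction p with
  | zero =>
    intro m s hs
    refine ⟨B m, ?_, ?_, ?_, ?_⟩ <;> simp <;> omega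
  | succ p ih =>
    intro m s hs
    by_cases hsp : s ≤ p * m
    · obtain ⟨M', h1, h2, h3, h4⟩ := ih m s hsp
      refine ⟨M' ++ [a], ?_, ?_, ?_, ?_⟩ <;>
        simp [h1, h2, h3, h4]
    · rcases Nat.eq_zero_or_pos p with rfl | hp
      · -- p = 0 : s ≤ m, s > 0 : M = B (m-s) ++ [a] ++ B s
        simp only [zero_mul, not_le] at hsp
        have hsm : s ≤ m := by simpa using hs
        refine ⟨B (m - s) ++ ([a] ++ B s), ?_, ?_, ?_, ?_⟩ <;> simp <;> omega
      · have hmle : m ≤ p * m := Nat.le_mul_of_pos_left m hp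
        have hexp : (p + 1) * m = p * m + m := by ring
        obtain ⟨M', h1, h2, h3, h4⟩ := ih m (s - m) (by omega)
        refine ⟨[a] ++ M', ?_, ?_, ?_, ?_⟩ <;>
          simp [h1, h2, h3, h4] <;> omega

lemma regionA (M : List ABC) (hc : scount M [c] = 0) (hp : 2 ≤ scount M [a]) :
    GoodF ([c] ++ M ++ [c]) := by
  have hble := sAB_le M
  set p := scount M [a] with hpdef
  set m := scount M [b] with hmdef
  set t := scount M [a, b] with htdef
  have hpm : (p - 1) * m + m = p * m := by
    have h1 : p - 1 + 1 = p := by omega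
    calc (p - 1) * m + m = ((p - 1) + 1) * m := by ring
    _ = p * m := by rw [h1]
  by_cases ht : m ≤ t
  · obtain ⟨N, h1, h2, h3, h4⟩ := realizeAB (p - 1) m (t - m) (by omega)
    have hMM : MEq3 M ([a] ++ N) := by
      refine ⟨?_, ?_, ?_, ?_, ?_, ?_⟩ <;>
        simp [h1, h2, h3, h4, hc, noC_bc, noC_abc, noC_abc _ h3, noC_bc h3,
          ← hpdef, ← hmdef, ← htdef] <;> omega
    refine ⟨[c] ++ ([a] ++ N) ++ [c], MEq3_congr hMM [c] [c], Or.inr ⟨[], N ++ [c], by simp⟩⟩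
  · have hm1 : m ≤ (p - 1) * m := Nat.le_mul_of_pos_left m (by omega)
    obtain ⟨N, h1, h2, h3, h4⟩ := realizeAB (p - 1) m t (by omega)
    have hMM : MEq3 M (N ++ [a]) := by
      refine ⟨?_, ?_, ?_, ?_, ?_, ?_⟩ <;>
        simp [h1, h2, h3, h4, hc, noC_bc, noC_abc, noC_abc _ h3, noC_bc h3,
          ← hpdef, ← hmdef, ← htdef] <;> omega
    refine ⟨[c] ++ (N ++ [a]) ++ [c], MEq3_congr hMM [c] [c], Or.inl ⟨[c] ++ N, [], by simp⟩⟩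

lemma regionC (N : List ABC) (ha : scount N [a] = 0) (hp : 2 ≤ scount N [c]) :
    GoodF ([a] ++ N ++ [a]) := by
  have e1 : scount ((N.map sw).reverse) [c] = 0 := by
    rw [scount_reverse_single]
    have : scount (N.map sw) [c] = scount N [a] := scount_map_inj sw_inj N [a]
    omega
  have e2 : 2 ≤ scount ((N.map sw).reverse) [a] := by
    rw [scount_reverse_single]
    have : scount (N.map sw) [a] = scount N [c] := scount_map_inj sw_inj N [c]
    omega
  have hg := regionA _ e1 e2
  have heq : ([c] ++ (N.map sw).reverse ++ [c]) = (([a] ++ N ++ [a]).map sw).reverse := by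
    simp [reverse_append, sw]
  rw [heq] at hg
  have hg2 := GoodF_rev hg
  rw [reverse_reverse] at hg2
  have hg3 := GoodF_swap hg2
  rwa [sw_sw] at hg3

end Region

section Window
open ABC

/-- the 7-letter alternating window starting with a -/
def Wwin (m1 m2 m3 m4 m5 m6 : ℕ) : List ABC :=
  [a] ++ B m1 ++ [c] ++ B m2 ++ [a] ++ B m3 ++ [c] ++ B m4 ++ [a] ++ B m5 ++ [c] ++ B m6 ++ [a]

/-- the 7-letter alternating window starting with c -/
def WwinC (m1 m2 m3 m4 m5 m6 : ℕ) : List ABC :=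
  [c] ++ B m1 ++ [a] ++ B m2 ++ [c] ++ B m3 ++ [a] ++ B m4 ++ [c] ++ B m5 ++ [a] ++ B m6 ++ [c]

lemma ruleR (m1 m2 m3 m4 m5 m6 : ℕ) (hm1 : 1 ≤ m1) (hm2 : 1 ≤ m2) (hm3 : 1 ≤ m3)
    (hm4 : 1 ≤ m4) (hm5 : 1 ≤ m5) (hm6 : 1 ≤ m6)
    (hC : m2 ≤ 2 * m5 + 3 * (m2 % 2)) :
    GoodF (Wwin m1 m2 m3 m4 m5 m6) := by
  refine ⟨B (m2 + m4 + m2 % 2 - (3 * (m2 + m2 % 2) / 2 + 2 * m4 + 1 - m1) / 2) ++ [a] ++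
      B (m1 + 2 * ((3 * (m2 + m2 % 2) / 2 + 2 * m4 + 1 - m1) / 2) -
        (3 * (m2 + m2 % 2) / 2 + 2 * m4)) ++ [a] ++ [c] ++
      B (2 * m2 + m3 + 2 * m4 - 2 * ((3 * (m2 + m2 % 2) / 2 + 2 * m4 + 1 - m1) / 2)) ++ [c] ++
      B ((3 * (m2 + m2 % 2) / 2 + 2 * m4 + 1 - m1) / 2) ++ [a] ++
      B ((2 * m5 + 3 * (m2 % 2) - m2) / 2) ++ [c] ++ B (m6 - m2 % 2) ++ [a], ?_,
    Or.inl ⟨B (m2 + m4 + m2 % 2 - (3 * (m2 + m2 % 2) / 2 + 2 * m4 + 1 - m1) / 2) ++ [a] ++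
      B (m1 + 2 * ((3 * (m2 + m2 % 2) / 2 + 2 * m4 + 1 - m1) / 2) -
        (3 * (m2 + m2 % 2) / 2 + 2 * m4)),
      B (2 * m2 + m3 + 2 * m4 - 2 * ((3 * (m2 + m2 % 2) / 2 + 2 * m4 + 1 - m1) / 2)) ++ [c] ++
      B ((3 * (m2 + m2 % 2) / 2 + 2 * m4 + 1 - m1) / 2) ++ [a] ++
      B ((2 * m5 + 3 * (m2 % 2) - m2) / 2) ++ [c] ++ B (m6 - m2 % 2) ++ [a], by simp⟩⟩
  refine ⟨?_, ?_, ?_, ?_, ?_, ?_⟩ <;> (simp [Wwin]; try omega)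

lemma windowA (m1 m2 m3 m4 m5 m6 : ℕ) : GoodF (Wwin m1 m2 m3 m4 m5 m6) := by
  rcases Nat.eq_zero_or_pos m1 with rfl | hm1
  · exact ⟨_, MEq3_refl _, Or.inl ⟨[],
      B m2 ++ [a] ++ B m3 ++ [c] ++ B m4 ++ [a] ++ B m5 ++ [c] ++ B m6 ++ [a], by simp [Wwin]⟩⟩
  rcases Nat.eq_zero_or_pos m2 with rfl | hm2
  · exact ⟨_, MEq3_refl _, Or.inr ⟨[a] ++ B m1,
      B m3 ++ [c] ++ B m4 ++ [a] ++ B m5 ++ [c] ++ B m6 ++ [a], by simp [Wwin]⟩⟩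
  rcases Nat.eq_zero_or_pos m3 with rfl | hm3
  · exact ⟨_, MEq3_refl _, Or.inl ⟨[a] ++ B m1 ++ [c] ++ B m2,
      B m4 ++ [a] ++ B m5 ++ [c] ++ B m6 ++ [a], by simp [Wwin]⟩⟩
  rcases Nat.eq_zero_or_pos m4 with rfl | hm4
  · exact ⟨_, MEq3_refl _, Or.inr ⟨[a] ++ B m1 ++ [c] ++ B m2 ++ [a] ++ B m3,
      B m5 ++ [c] ++ B m6 ++ [a], by simp [Wwin]⟩⟩
  rcases Nat.eq_zero_or_pos m5 with rfl | hm5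
  · exact ⟨_, MEq3_refl _, Or.inl ⟨[a] ++ B m1 ++ [c] ++ B m2 ++ [a] ++ B m3 ++ [c] ++ B m4,
      B m6 ++ [a], by simp [Wwin]⟩⟩
  rcases Nat.eq_zero_or_pos m6 with rfl | hm6
  · exact ⟨_, MEq3_refl _, Or.inr ⟨[a] ++ B m1 ++ [c] ++ B m2 ++ [a] ++ B m3 ++ [c] ++ B m4
      ++ [a] ++ B m5, [], by simp [Wwin]⟩⟩
  by_cases hC : m2 ≤ 2 * m5 + 3 * (m2 % 2)
  · exact ruleR m1 m2 m3 m4 m5 m6 hm1 hm2 hm3 hm4 hm5 hm6 hC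
  · have h := ruleR m6 m5 m4 m3 m2 m1 hm6 hm5 hm4 hm3 hm2 hm1 (by omega)
    have hr := GoodF_rev h
    have heq : (Wwin m6 m5 m4 m3 m2 m1).reverse = Wwin m1 m2 m3 m4 m5 m6 := by
      simp [Wwin, reverse_append]
    rwa [heq] at hr

lemma windowC (m1 m2 m3 m4 m5 m6 : ℕ) : GoodF (WwinC m1 m2 m3 m4 m5 m6) := by
  have h := GoodF_swap (windowA m1 m2 m3 m4 m5 m6)
  have heq : (Wwin m1 m2 m3 m4 m5 m6).map sw = WwinC m1 m2 m3 m4 m5 m6 := by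
    simp [Wwin, WwinC, sw]
  rwa [heq] at h

end Window

section Structure
open ABC

def plen (w : List ABC) : ℕ := ((projAC w).destutter (· ≠ ·)).length

@[simp] lemma projAC_nil : projAC [] = [] := rfl
@[simp] lemma projAC_cons_b (w : List ABC) : projAC (b :: w) = projAC w := by
  simp [projAC]
@[simp] lemma projAC_cons_a (w : List ABC) : projAC (a :: w) = a :: projAC w := by
  simp [projAC]
@[simp] lemma projAC_cons_c (w : List ABC) : projAC (c :: w) = c :: projAC w := by
  simp [projAC]
@[simp] lemma projAC_append (u v : List ABC) : projAC (u ++ v) = projAC u ++ projAC v := by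
  simp [projAC]

lemma destutter_dup (x : ABC) (t : List ABC) :
    (x :: x :: t).destutter (· ≠ ·) = (x :: t).destutter (· ≠ ·) := by
  rw [destutter_cons_cons, if_neg (by simp), destutter_cons']

lemma destutter_ne {x z : ABC} (h : x ≠ z) (t : List ABC) :
    (x :: z :: t).destutter (· ≠ ·) = x :: (z :: t).destutter (· ≠ ·) := by
  rw [destutter_cons_cons, if_pos h, destutter_cons']

lemma destutter_rep (y : ABC) : ∀ n, (y :: replicate n y).destutter (· ≠ ·) = [y] := by
  intro n
  induction n with
  | zero => simp
  | succ n ih => rw [replicate_succ, destutter_dup, ih]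

lemma first_letter : ∀ w : List ABC, projAC w ≠ [] →
    ∃ n y w2, (y = a ∨ y = c) ∧ w = B n ++ y :: w2 ∧ projAC w = y :: projAC w2 := by
  intro w
  induction w with
  | nil => simp
  | cons t w ih =>
    intro hne
    cases t with
    | a => exact ⟨0, a, w, Or.inl rfl, by simp, by simp⟩
    | c => exact ⟨0, c, w, Or.inr rfl, by simp, by simp⟩
    | b =>
      have hne' : projAC w ≠ [] := by simpa using hne
      obtain ⟨n, y, w2, hy, heq, hproj⟩ := ih hne'
      exact ⟨n + 1, y, w2, hy, by simp [B, replicate_succ, heq], by simpa using hproj⟩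

lemma block_split : ∀ (w : List ABC) (y : ABC),
    ∃ M rest, w = M ++ rest ∧ (∀ z ∈ M, z = y ∨ z = b) ∧
      (rest = [] ∨ ∃ x' w3, rest = x' :: w3 ∧ x' ≠ y ∧ x' ≠ b) := by
  intro w y
  induction w with
  | nil => exact ⟨[], [], by simp, by simp, Or.inl rfl⟩
  | cons t w ih =>
    by_cases ht : t = y ∨ t = b
    · obtain ⟨M, rest, heq, hmem, hrest⟩ := ih
      refine ⟨t :: M, rest, by rw [cons_append, heq], ?_, hrest⟩
      intro z hz
      rcases mem_cons.mp hz with rfl | hz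
      · exact ht
      · exact hmem z hz
    · push_neg at ht
      exact ⟨[], t :: w, by simp, by simp, Or.inr ⟨t, w, rfl, ht.1, ht.2⟩⟩

lemma projAC_of_block {M : List ABC} {y : ABC} (hy : y = a ∨ y = c)
    (hmem : ∀ z ∈ M, z = y ∨ z = b) :
    projAC M = replicate (scount M [y]) y := by
  have hyb : y ≠ b := by rcases hy with rfl | rfl <;> simp
  induction M with
  | nil => simp
  | cons z M ih =>
    have hz := hmem z (by simp)
    have ih' := ih (fun z hz => hmem z (by simp [hz]))
    rcases hz with rfl | rfl
    · have : projAC (z :: M) = z :: projAC M := by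
        rcases hy with rfl | rfl <;> simp
      rw [this, ih', scount_cons, if_pos rfl, scount_empty_pat, ← replicate_succ]
    · rw [projAC_cons_b, ih', scount_cons, if_neg hyb]
      simp

lemma scount_zero_of_block {M : List ABC} {y x : ABC}
    (hmem : ∀ z ∈ M, z = y ∨ z = b) (hxy : x ≠ y) (hxb : x ≠ b) :
    scount M [x] = 0 := by
  induction M with
  | nil => simp
  | cons z M ih =>
    have hz := hmem z (by simp)
    have ih' := ih (fun z hz => hmem z (by simp [hz]))
    rw [scount_cons, ih', scount_empty_pat]
    rcases hz with rfl | rfl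
    · rw [if_neg hxy]
    · rw [if_neg hxb]

inductive Win : ℕ → ABC → List ABC → Prop
  | zero (x : ABC) (w : List ABC) : Win 0 x w
  | succ (k : ℕ) (x y : ABC) (n : ℕ) (w2 : List ABC) :
      (y = a ∨ y = c) → y ≠ x → Win k y w2 → Win (k + 1) x (B n ++ y :: w2)

lemma scan : ∀ (k : ℕ) (x : ABC) (w : List ABC), (x = a ∨ x = c) →
    (∀ s, projAC w = x :: s → False) → k ≤ plen w →
    Win k x w ∨ GoodF (x :: w) := by
  intro k
  induction k with
  | zero => exact fun x w _ _ _ => Or.inl (Win.zero x w)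
  | succ k ih =>
    intro x w hx hhead hk
    have hne : projAC w ≠ [] := by
      intro h
      rw [plen, h] at hk
      simp at hk
    obtain ⟨n, y, w2, hy, rfl, hproj⟩ := first_letter w hne
    have hyx : y ≠ x := fun h => hhead (projAC w2) (by rw [hproj, h])
    rcases k with _ | k
    · exact Or.inl (Win.succ 0 x y n w2 hy hyx (Win.zero y w2))
    rcases hp2 : projAC w2 with _ | ⟨z, t⟩
    · exfalso
      rw [plen, hproj, hp2, destutter_singleton] at hk
      simp at hk
    by_cases hzy : z = y
    · -- block of y continues : escape via region lemma
      right
      obtain ⟨M, rest, rfl, hmem, hrest⟩ := block_split w2 y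
      rcases hrest with rfl | ⟨x', w3, rfl, hx'y, hx'b⟩
      · exfalso
        have hpm := projAC_of_block hy hmem
        rw [plen, hproj, append_nil, hpm, destutter_rep] at hk
        simp at hk
      · have hx'ac : x' = a ∨ x' = c := by cases x' <;> simp_all
        have hMy : 1 ≤ scount M [y] := by
          by_contra hcon
          have h0 : scount M [y] = 0 := by omega
          have hpm := projAC_of_block hy hmem
          rw [projAC_append, hpm, h0] at hp2
          rcases hy with rfl | rfl <;> rcases hx'ac with rfl | rfl <;> simp_all
        have hxx' : x' = x := by
          rcases hy with rfl | rfl <;> rcases hx'ac with rfl | rfl <;>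
            rcases hx with rfl | rfl <;> simp_all
        have hmemfull : ∀ z' ∈ B n ++ y :: M, z' = y ∨ z' = b := by
          intro z' hz'
          rcases mem_append.mp hz' with h' | h'
          · exact Or.inr (eq_of_mem_replicate h')
          · rcases h' with _ | h'
            · exact Or.inl rfl
            · exact hmem _ (by assumption)
        subst hxx'
        rcases hy with rfl | rfl
        · -- y = a, x = x' = c
          rcases hx with rfl | rfl
          · exact absurd rfl hyx
          have hgood := regionA (B n ++ a :: M)
            (scount_zero_of_block hmemfull (by simp) (by simp))
            (by
              have h1 : scount (B n ++ a :: M) [a] = 1 + scount M [a] := by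
                simp [scount_cons]; omega
              omega)
          have := GoodF_mono hgood [] w3
          have heq : [] ++ ([c] ++ (B n ++ a :: M) ++ [c]) ++ w3
              = c :: (B n ++ a :: (M ++ c :: w3)) := by simp
          rwa [heq] at this
        · -- y = c, x = x' = a
          rcases hx with rfl | rfl
          swap
          · exact absurd rfl hyx
          have hgood := regionC (B n ++ c :: M)
            (scount_zero_of_block hmemfull (by simp) (by simp))
            (by
              have h1 : scount (B n ++ c :: M) [c] = 1 + scount M [c] := by
                simp [scount_cons]; omega
              omega)
          have := GoodF_mono hgood [] w3
          have heq : [] ++ ([a] ++ (B n ++ c :: M) ++ [a]) ++ w3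
              = a :: (B n ++ c :: (M ++ a :: w3)) := by simp
          rwa [heq] at this
    · -- distinct next letter : recurse
      have hplen : plen (B n ++ y :: w2) = plen w2 + 1 := by
        rw [plen, hproj, hp2, destutter_ne (fun h => hzy h.symm), plen, hp2]
        simp
      have hrec := ih y w2 hy (fun s hs => hzy (by rw [hp2] at hs; injection hs))
        (by omega)
      rcases hrec with hwin | hgood
      · exact Or.inl (Win.succ (k + 1) x y n w2 hy hyx hwin)
      · right
        have := GoodF_mono hgood (x :: B n) []
        have heq : (x :: B n) ++ (y :: w2) ++ [] = x :: (B n ++ y :: w2) := by simp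
        rwa [heq] at this

end Structure

section Main
open ABC

lemma win6 {x : ABC} {w : List ABC} (hx : x = a ∨ x = c) (h : Win 6 x w) :
    GoodF (x :: w) := by
  rcases h with _ | ⟨_, _, y1, m1, w1, hy1, hne1, h⟩
  rcases h with _ | ⟨_, _, y2, m2, w2, hy2, hne2, h⟩
  rcases h with _ | ⟨_, _, y3, m3, w3, hy3, hne3, h⟩
  rcases h with _ | ⟨_, _, y4, m4, w4, hy4, hne4, h⟩
  rcases h with _ | ⟨_, _, y5, m5, w5, hy5, hne5, h⟩
  rcases h with _ | ⟨_, _, y6, m6, w6, hy6, hne6, -⟩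
  rcases hx with rfl | rfl
  · rcases hy1 with rfl | rfl; · exact absurd rfl hne1
    rcases hy2 with rfl | rfl; swap; · exact absurd rfl hne2
    rcases hy3 with rfl | rfl; · exact absurd rfl hne3
    rcases hy4 with rfl | rfl; swap; · exact absurd rfl hne4
    rcases hy5 with rfl | rfl; · exact absurd rfl hne5
    rcases hy6 with rfl | rfl; swap; · exact absurd rfl hne6
    have := GoodF_mono (windowA m1 m2 m3 m4 m5 m6) [] w6
    have heq : [] ++ Wwin m1 m2 m3 m4 m5 m6 ++ w6
        = a :: (B m1 ++ c :: (B m2 ++ a :: (B m3 ++ c :: (B m4 ++ a ::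
            (B m5 ++ c :: (B m6 ++ a :: w6)))))) := by
      simp [Wwin]
    rwa [heq] at this
  · rcases hy1 with rfl | rfl; swap; · exact absurd rfl hne1
    rcases hy2 with rfl | rfl; · exact absurd rfl hne2
    rcases hy3 with rfl | rfl; swap; · exact absurd rfl hne3
    rcases hy4 with rfl | rfl; · exact absurd rfl hne4
    rcases hy5 with rfl | rfl; swap; · exact absurd rfl hne5
    rcases hy6 with rfl | rfl; · exact absurd rfl hne6
    have := GoodF_mono (windowC m1 m2 m3 m4 m5 m6) [] w6
    have heq : [] ++ WwinC m1 m2 m3 m4 m5 m6 ++ w6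
        = c :: (B m1 ++ a :: (B m2 ++ c :: (B m3 ++ a :: (B m4 ++ c ::
            (B m5 ++ a :: (B m6 ++ c :: w6)))))) := by
      simp [WwinC]
    rwa [heq] at this

lemma main_good : ∀ w : List ABC, 7 ≤ plen w → GoodF w := by
  intro w
  induction w with
  | nil => intro h; simp [plen] at h
  | cons t w ih =>
    intro h
    have step : ∀ (x : ABC), (x = a ∨ x = c) →
        projAC (x :: w) = x :: projAC w → 7 ≤ plen (x :: w) → GoodF (x :: w) := by
      intro x hxac hp h7
      rcases hpw : projAC w with _ | ⟨z, t'⟩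
      · exfalso
        rw [plen, hp, hpw, destutter_singleton] at h7
        simp at h7
      by_cases hz : z = x
      · have hpl : plen (x :: w) = plen w := by
          rw [plen, hp, hpw, hz, destutter_dup, plen, hpw, hz]
        have hg := ih (by omega)
        have := GoodF_mono hg [x] []
        have heq : [x] ++ w ++ [] = x :: w := by simp
        rwa [heq] at this
      · have hpl : plen (x :: w) = plen w + 1 := by
          rw [plen, hp, hpw, destutter_ne (fun hh => hz hh.symm), plen, hpw]
          simp
        rcases scan 6 x w hxac
          (fun s hs => by rw [hpw] at hs; exact hz (by injection hs))
          (by omega) with hwin | hgood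
        · exact win6 hxac hwin
        · exact hgood
    cases t with
    | b =>
      have hpl : plen (b :: w) = plen w := by rw [plen, plen, projAC_cons_b]
      have hg := ih (by omega)
      have := GoodF_mono hg [b] []
      have heq : [b] ++ w ++ [] = b :: w := by simp
      rwa [heq] at this
    | a => exact step a (Or.inl rfl) (by simp) h
    | c => exact step c (Or.inr rfl) (by simp) h

end Main

theorem stmt_11 (w : List ABC)
    (hprint : 7 ≤ ((projAC w).destutter (· ≠ ·)).length) :
    ∃ w' : List ABC, MEq3 w w' ∧ ([a, c] <:+: w' ∨ [c, a] <:+: w') := by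
  exact main_good w hprint
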